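/- arXiv:1208.3102 — 3 statements merged into one kernel-verified Lean document; each statement's English description precedes it below -/
import Mathlib

section
/- Let A be a nonnegatively graded connected k-algebra and f : M → M' a degree-preserving A-linear morphism of ℤ-graded left A-modules. (i) If M' is bounded below and f is surjective and essential, then 1_k ⊗_A f : k ⊗_A M → k ⊗_A M' is bijective; if moreover M is also bounded below, the converse holds: if 1_k ⊗_A f is bijective then f is surjective and essential. -/
set_option synthInstance.maxHeartbeats 1000000
set_option maxHeartbeats 1000000
open scoped Classical


/-!
STATEMENT 1 (Lemma `lem:biyectiontensor` (i)): for a degree-preserving `A`-linear map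
`f : M → M'` of `ℤ`-graded modules over a nonnegatively graded connected `k`-algebra `A`,
if `M'` is bounded below and `f` is surjective and essential then `1_k ⊗_A f` is
bijective; if moreover `M` is bounded below, the converse holds.

Here `k ⊗_A X` is identified with `X/(A_{>0}·X)`, so the bijectivity of `1_k ⊗_A f`
is expressed as: the induced map `M/(A_{>0}M) → M'/(A_{>0}M')` is bijective, i.e.
`f⁻¹(A_{>0}M') = A_{>0}M` (injectivity) and `A_{>0}M' + f(M) = M'` (surjectivity).
-/

namespace Stmt1

variable {k A : Type} [Field k] [Ring A] [Algebra k A]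

/-- The subspace `A_{>0}·X` of a module `X`, for `Apos = A_{>0}`. -/
def posSMul (Apos : Submodule k A) (X : Type) [AddCommGroup X] [Module k X] [Module A X]
    [IsScalarTower k A X] : Submodule k X :=
  Submodule.span k {x : X | ∃ a ∈ Apos, ∃ x' : X, x = a • x'}

/-- A surjective morphism `f : M → M'` of graded modules is *essential* if every
degree-preserving morphism `g : N → M` of graded `A`-modules such that `f ∘ g` is
surjective is itself surjective. -/
def IsEssential (𝒜 : ℤ → Submodule k A) {M M' : Type}
    [AddCommGroup M] [Module k M] [Module A M] [IsScalarTower k A M]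
    [AddCommGroup M'] [Module k M'] [Module A M'] [IsScalarTower k A M']
    (ℳ : ℤ → Submodule k M) (f : M →ₗ[A] M') : Prop :=
  ∀ (N : Type) (_ : AddCommGroup N) (_ : Module k N) (_ : Module A N)
    (_ : IsScalarTower k A N) (𝒩 : ℤ → Submodule k N)
    (_ : DirectSum.Decomposition 𝒩) (_ : SetLike.GradedSMul 𝒜 𝒩)
    (g : N →ₗ[A] M), (∀ (n : ℤ) (x : N), x ∈ 𝒩 n → g x ∈ ℳ n) →
      Function.Surjective (f ∘ g) → Function.Surjective g

section Aux

variable (𝒜 : ℤ → Submodule k A) [galg : GradedAlgebra 𝒜]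
variable {X : Type} [AddCommGroup X] [Module k X] [Module A X] [IsScalarTower k A X]
variable (𝒳 : ℤ → Submodule k X) [DirectSum.Decomposition 𝒳]

/-- The degree-`n` projection as a `k`-linear map. -/
noncomputable def proj (n : ℤ) : X →ₗ[k] X where
  toFun x := (DirectSum.decompose 𝒳 x n : X)
  map_add' x y := by simp [DirectSum.decompose_add, DirectSum.add_apply]
  map_smul' c x := by simp [DirectSum.decompose_smul, DirectSum.smul_apply]

theorem proj_apply (n : ℤ) (x : X) : proj 𝒳 n x = (DirectSum.decompose 𝒳 x n : X) := rfl

theorem proj_mem (n : ℤ) (x : X) : proj 𝒳 n x ∈ 𝒳 n := (DirectSum.decompose 𝒳 x n).2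

theorem proj_of_mem_same {n : ℤ} {x : X} (hx : x ∈ 𝒳 n) : proj 𝒳 n x = x :=
  DirectSum.decompose_of_mem_same 𝒳 hx

theorem proj_of_mem_ne {m n : ℤ} {x : X} (hx : x ∈ 𝒳 m) (h : m ≠ n) : proj 𝒳 n x = 0 :=
  DirectSum.decompose_of_mem_ne 𝒳 hx h

theorem sum_proj (x : X) :
    ∑ n ∈ (DirectSum.decompose 𝒳 x).support, proj 𝒳 n x = x :=
  DirectSum.sum_support_decompose 𝒳 x

theorem mem_pos {i : ℤ} (hi : 0 < i) {a : A} (ha : a ∈ 𝒜 i) : a ∈ ⨆ n > (0:ℤ), 𝒜 n :=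
  Submodule.mem_iSup_of_mem i (Submodule.mem_iSup_of_mem hi ha)

theorem smul_mem_posSMul {a : A} (ha : a ∈ ⨆ n > (0:ℤ), 𝒜 n) (x : X) :
    a • x ∈ posSMul (⨆ n > (0:ℤ), 𝒜 n) X :=
  Submodule.subset_span ⟨a, ha, x, rfl⟩

theorem sub_proj_zero_mem_pos (hneg : ∀ n : ℤ, n < 0 → 𝒜 n = ⊥) (a : A) :
    a - proj 𝒜 0 a ∈ ⨆ n > (0:ℤ), 𝒜 n := by
  classical
  have hsum := sum_proj 𝒜 a
  set s := (DirectSum.decompose 𝒜 a).support with hs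
  have hterm : ∀ i ∈ s.erase 0, proj 𝒜 i a ∈ ⨆ n > (0:ℤ), 𝒜 n := by
    intro i hi
    have hne : i ≠ 0 := Finset.ne_of_mem_erase hi
    rcases lt_trichotomy i 0 with h | h | h
    · have : proj 𝒜 i a ∈ (⊥ : Submodule k A) := (hneg i h) ▸ proj_mem 𝒜 i a
      simp only [Submodule.mem_bot] at this
      rw [this]; exact Submodule.zero_mem _
    · exact absurd h hne
    · exact mem_pos 𝒜 h (proj_mem 𝒜 i a)
  have key : a - proj 𝒜 0 a = ∑ i ∈ s.erase 0, proj 𝒜 i a := by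
    by_cases h0 : (0:ℤ) ∈ s
    · rw [Finset.sum_erase_eq_sub h0, hsum]
    · have : proj 𝒜 0 a = 0 := by
        have h2 := DFinsupp.notMem_support_iff.mp h0
        rw [proj_apply, h2]; rfl
      rw [this, sub_zero, Finset.erase_eq_of_notMem h0, hsum]
  rw [key]
  exact Submodule.sum_mem _ hterm

variable [gsmul : SetLike.GradedSMul 𝒜 𝒳]

/-- Master lemma: the degree-`n` projection of an element of `A_{>0}·X` lies in any
`k`-submodule `q` containing all products `a • z` with `a` homogeneous of positive degree,
`z` homogeneous, of total degree `n`. -/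
theorem proj_posSMul_mem (n : ℤ) (q : Submodule k X)
    (hgen : ∀ i : ℤ, 0 < i → ∀ a ∈ 𝒜 i, ∀ j : ℤ, ∀ z ∈ 𝒳 j, i + j = n → a • z ∈ q)
    {x : X} (hx : x ∈ posSMul (⨆ m > (0:ℤ), 𝒜 m) X) : proj 𝒳 n x ∈ q := by
  induction hx using Submodule.span_induction with
  | zero => simp
  | add y z _ _ hy hz => rw [map_add]; exact q.add_mem hy hz
  | smul c y _ hy => rw [map_smul]; exact q.smul_mem c hy
  | mem y hy =>
    obtain ⟨a, ha, z, rfl⟩ := hy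
    refine Submodule.iSup_induction (fun i => ⨆ _ : i > 0, 𝒜 i)
      (motive := fun b => proj 𝒳 n (b • z) ∈ q) ha (fun i a hai => ?_) (by simp)
      (fun a b ha hb => by show proj 𝒳 n ((a + b) • z) ∈ q; rw [add_smul, map_add]; exact q.add_mem ha hb)
    · by_cases hi : i > 0
      · simp only [iSup_pos hi] at hai
        refine DirectSum.Decomposition.inductionOn 𝒳
          (motive := fun z => proj 𝒳 n (a • z) ∈ q) (by simp)
          (fun {j} z' => ?_)
          (fun z z' hz hz' => by
            show proj 𝒳 n (a • (z + z')) ∈ q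
            rw [smul_add, map_add]; exact q.add_mem hz hz') z
        obtain ⟨z', hz'⟩ := z'
        show proj 𝒳 n (a • z') ∈ q
        have hmem : a • z' ∈ 𝒳 (i + j) := SetLike.GradedSMul.smul_mem hai hz'
        by_cases hij : i + j = n
        · subst hij
          rw [proj_of_mem_same 𝒳 hmem]
          exact hgen i hi a hai j z' hz' rfl
        · rw [proj_of_mem_ne 𝒳 hmem hij]; exact q.zero_mem
      · simp only [iSup_neg hi] at hai
        simp only [Submodule.mem_bot] at hai
        simp [hai]

include galg gsmul in
/-- A span (over `A`) of homogeneous elements is closed under taking homogeneous components. -/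
theorem span_homogeneous_graded (T : Set X) (hT : ∀ t ∈ T, ∃ n, t ∈ 𝒳 n) :
    ∀ s ∈ Submodule.span A T, ∀ n : ℤ, proj 𝒳 n s ∈ Submodule.span A T := by
  intro s hs
  induction hs using Submodule.span_induction with
  | zero => simp
  | add y z _ _ hy hz => intro n; rw [map_add]; exact Submodule.add_mem _ (hy n) (hz n)
  | mem t ht =>
    intro n
    obtain ⟨m, hm⟩ := hT t ht
    by_cases h : m = n
    · subst h; rw [proj_of_mem_same 𝒳 hm]; exact Submodule.subset_span ht
    · rw [proj_of_mem_ne 𝒳 hm h]; exact Submodule.zero_mem _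
  | smul a s hs hIH =>
    refine DirectSum.Decomposition.inductionOn 𝒜
      (motive := fun a => ∀ n : ℤ, proj 𝒳 n (a • s) ∈ Submodule.span A T) (by simp)
      (fun {i} a' => ?_)
      (fun a a' ha ha' n => by
        show proj 𝒳 n ((a + a') • s) ∈ Submodule.span A T
        rw [add_smul, map_add]; exact Submodule.add_mem _ (ha n) (ha' n)) a
    obtain ⟨a, hai⟩ := a'
    intro n
    show proj 𝒳 n ((a : A) • s) ∈ Submodule.span A T
    have hrw : a • s = ∑ j ∈ (DirectSum.decompose 𝒳 s).support, a • proj 𝒳 j s := by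
      rw [← Finset.smul_sum, sum_proj]
    rw [hrw, map_sum]
    refine Submodule.sum_mem _ fun j _ => ?_
    have hmem : a • proj 𝒳 j s ∈ 𝒳 (i + j) :=
      SetLike.GradedSMul.smul_mem hai (proj_mem 𝒳 j s)
    by_cases hij : i + j = n
    · subst hij
      rw [proj_of_mem_same 𝒳 hmem]
      exact Submodule.smul_mem _ a (hIH j)
    · rw [proj_of_mem_ne 𝒳 hmem hij]; exact Submodule.zero_mem _

section Map

variable {N : Type} [AddCommGroup N] [Module k N] [Module A N] [IsScalarTower k A N]
variable (𝒩 : ℤ → Submodule k N) [DirectSum.Decomposition 𝒩]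

/-- A degree-preserving morphism commutes with the homogeneous projections. -/
theorem proj_map (g : N →ₗ[A] X) (hg : ∀ (n : ℤ) (z : N), z ∈ 𝒩 n → g z ∈ 𝒳 n)
    (z : N) (n : ℤ) : proj 𝒳 n (g z) = g (proj 𝒩 n z) := by
  refine DirectSum.Decomposition.inductionOn 𝒩
    (motive := fun z => proj 𝒳 n (g z) = g (proj 𝒩 n z)) (by simp)
    (fun {j} m => ?_)
    (fun z z' hz hz' => by
      show proj 𝒳 n (g (z + z')) = g (proj 𝒩 n (z + z'))
      rw [map_add, map_add, map_add, hz, hz', map_add]) z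
  obtain ⟨m, hm⟩ := m
  show proj 𝒳 n (g m) = g (proj 𝒩 n m)
  by_cases h : j = n
  · subst h
    rw [proj_of_mem_same 𝒳 (hg j m hm), proj_of_mem_same 𝒩 hm]
  · rw [proj_of_mem_ne 𝒳 (hg j m hm) h, proj_of_mem_ne 𝒩 hm h, map_zero]

end Map

/-- Graded Nakayama lemma: a "graded" `A`-submodule `S` of a bounded-below graded module `X`
with `A_{>0}·X + S = X` is all of `X`. -/
theorem nakayama (n₀ : ℤ) (hbd : ∀ n : ℤ, n < n₀ → 𝒳 n = ⊥) (S : Submodule A X)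
    (hgr : ∀ s ∈ S, ∀ n : ℤ, proj 𝒳 n s ∈ S)
    (hsup : ∀ x : X, ∃ p ∈ posSMul (⨆ m > (0:ℤ), 𝒜 m) X, ∃ s ∈ S, x = p + s) :
    ∀ x : X, x ∈ S := by
  have key : ∀ j : ℕ, ∀ m : ℤ, m < n₀ + j → ∀ x ∈ 𝒳 m, x ∈ S := by
    intro j
    induction j with
    | zero =>
      intro m hm x hx
      rw [hbd m (by omega)] at hx
      simp only [Submodule.mem_bot] at hx
      rw [hx]; exact S.zero_mem
    | succ j ih =>
      intro m hm x hx
      by_cases hmj : m < n₀ + j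
      · exact ih m hmj x hx
      · have hm' : m = n₀ + j := by omega
        obtain ⟨p, hp, s, hsS, rfl⟩ := hsup x
        have hps : proj 𝒳 m (p + s) = proj 𝒳 m p + proj 𝒳 m s := map_add _ _ _
        have hx' : (p + s) = proj 𝒳 m p + proj 𝒳 m s := by
          rw [← hps, proj_of_mem_same 𝒳 hx]
        rw [hx']
        refine S.add_mem ?_ (hgr s hsS m)
        have := proj_posSMul_mem 𝒜 𝒳 m (S.restrictScalars k) ?_ hp
        · exact this
        · intro i hi a ha jj z hz hij
          have hjz : z ∈ S := ih jj (by omega) z hz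
          exact S.smul_mem a hjz
  have hall : ∀ m : ℤ, ∀ x ∈ 𝒳 m, x ∈ S := by
    intro m x hx
    have h1 : m < n₀ + ((m + 1 - n₀).toNat : ℤ) := by omega
    exact key (m + 1 - n₀).toNat m h1 x hx
  refine DirectSum.Decomposition.inductionOn 𝒳 (motive := fun x => x ∈ S) S.zero_mem
    (fun {i} m => hall i m m.2) (fun x y hx hy => S.add_mem hx hy)

section Apos

variable {X' : Type} [AddCommGroup X'] [Module k X'] [Module A X'] [IsScalarTower k A X']

theorem posSMul_map (f : X →ₗ[A] X') {x : X}
    (hx : x ∈ posSMul (⨆ m > (0:ℤ), 𝒜 m) X) : f x ∈ posSMul (⨆ m > (0:ℤ), 𝒜 m) X' := by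
  induction hx using Submodule.span_induction with
  | zero => simp [Submodule.zero_mem]
  | add y z _ _ hy hz => rw [map_add]; exact Submodule.add_mem _ hy hz
  | smul c y _ hy =>
    rw [LinearMap.map_smul_of_tower]; exact Submodule.smul_mem _ c hy
  | mem y hy =>
    obtain ⟨a, ha, z, rfl⟩ := hy
    rw [LinearMap.map_smul]
    exact smul_mem_posSMul 𝒜 ha (f z)

theorem posSMul_preimage (f : X →ₗ[A] X') (hsurj : Function.Surjective f) {y : X'}
    (hy : y ∈ posSMul (⨆ m > (0:ℤ), 𝒜 m) X') :
    ∃ x ∈ posSMul (⨆ m > (0:ℤ), 𝒜 m) X, f x = y := by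
  induction hy using Submodule.span_induction with
  | zero => exact ⟨0, Submodule.zero_mem _, map_zero f⟩
  | add y z _ _ hy hz =>
    obtain ⟨x₁, hx₁, rfl⟩ := hy
    obtain ⟨x₂, hx₂, rfl⟩ := hz
    exact ⟨x₁ + x₂, Submodule.add_mem _ hx₁ hx₂, map_add f x₁ x₂⟩
  | smul c y _ hy =>
    obtain ⟨x₁, hx₁, rfl⟩ := hy
    exact ⟨c • x₁, Submodule.smul_mem _ c hx₁, LinearMap.map_smul_of_tower f c x₁⟩
  | mem y hy =>
    obtain ⟨a, ha, z, rfl⟩ := hy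
    obtain ⟨w, rfl⟩ := hsurj z
    exact ⟨a • w, smul_mem_posSMul 𝒜 ha w, LinearMap.map_smul f a w⟩

end Apos

/-- Hyperplane construction over the field `k`. -/
theorem hyperplane (W : Submodule k X) (P0 : Submodule k X) (hP0 : P0 ≤ W) {x : X}
    (hx : x ∈ W) (hxP : x ∉ P0) :
    ∃ H : Submodule k X, P0 ≤ H ∧ H ≤ W ∧ x ∉ H ∧
      ∀ y ∈ W, ∃ h ∈ H, ∃ c : k, y = h + c • x := by
  obtain ⟨C, hC⟩ := Submodule.exists_isCompl (Submodule.span k {P0.mkQ x})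
  refine ⟨W ⊓ Submodule.comap P0.mkQ C, fun p hp => ⟨hP0 hp, ?_⟩, inf_le_left, ?_, ?_⟩
  · have h0 : P0.mkQ p = 0 := (Submodule.Quotient.mk_eq_zero _).2 hp
    exact Submodule.mem_comap.2 (by rw [h0]; exact C.zero_mem)
  · rintro ⟨-, hxC⟩
    have h1 : P0.mkQ x ∈ Submodule.span k {P0.mkQ x} ⊓ C :=
      ⟨Submodule.mem_span_singleton_self _, hxC⟩
    rw [hC.inf_eq_bot] at h1
    simp only [Submodule.mem_bot] at h1
    exact hxP ((Submodule.Quotient.mk_eq_zero _).1 h1)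
  · intro y hy
    have htop : P0.mkQ y ∈ Submodule.span k {P0.mkQ x} ⊔ C := by
      rw [hC.sup_eq_top]; trivial
    obtain ⟨u, hu, v, hv, huv⟩ := Submodule.mem_sup.1 htop
    obtain ⟨c, rfl⟩ := Submodule.mem_span_singleton.1 hu
    refine ⟨y - c • x, ⟨W.sub_mem hy (W.smul_mem c hx), ?_⟩, c, by abel⟩
    have h1 : P0.mkQ (y - c • x) = v := by
      rw [map_sub, map_smul, ← huv]; abel
    exact Submodule.mem_comap.2 (by rw [h1]; exact hv)

section Ess

variable {M' : Type} [AddCommGroup M'] [Module k M'] [Module A M'] [IsScalarTower k A M']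

include galg gsmul in
theorem essential_submodule (f : X →ₗ[A] M') (hess : IsEssential 𝒜 𝒳 f)
    (S : Submodule A X) (hgr : ∀ s ∈ S, ∀ n : ℤ, proj 𝒳 n s ∈ S)
    (hs : ∀ y : M', ∃ s : X, s ∈ S ∧ f s = y) : ∀ x : X, x ∈ S := by
  classical
  let ιk : ↥S →ₗ[k] X :=
    { toFun := Subtype.val, map_add' := fun _ _ => rfl, map_smul' := fun _ _ => rfl }
  have hιinj : Function.Injective ιk := Subtype.val_injective
  let 𝒩 : ℤ → Submodule k ↥S := fun n => (𝒳 n).comap ιk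
  have hNint : DirectSum.IsInternal 𝒩 := by
    rw [DirectSum.isInternal_submodule_iff_iSupIndep_and_iSup_eq_top]
    constructor
    · intro n
      rw [disjoint_iff_inf_le]
      rintro x ⟨hx1, hx2⟩
      have hMint : DirectSum.IsInternal 𝒳 := DirectSum.Decomposition.isInternal 𝒳
      have hind := hMint.submodule_iSupIndep
      have hle : Submodule.map ιk (⨆ j, ⨆ _ : j ≠ n, 𝒩 j) ≤ ⨆ j, ⨆ _ : j ≠ n, 𝒳 j := by
        rw [Submodule.map_iSup]
        refine iSup_mono fun j => ?_
        rw [Submodule.map_iSup]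
        exact iSup_mono fun _ => Submodule.map_comap_le _ _
      have h2 : ιk x ∈ ⨆ j, ⨆ _ : j ≠ n, 𝒳 j := hle (Submodule.mem_map_of_mem hx2)
      have h0 : ιk x = 0 := Submodule.disjoint_def.1 (hind n) _ hx1 h2
      have : x = 0 := hιinj (by rw [h0, map_zero])
      simp [this]
    · rw [eq_top_iff]
      rintro s -
      have hrep : s = ∑ n ∈ (DirectSum.decompose 𝒳 (s : X)).support,
          (⟨proj 𝒳 n (s : X), hgr s s.2 n⟩ : ↥S) := by
        apply Subtype.ext
        rw [AddSubmonoidClass.coe_finset_sum]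
        exact (sum_proj 𝒳 (s : X)).symm
      rw [hrep]
      refine Submodule.sum_mem _ fun n _ => ?_
      exact Submodule.mem_iSup_of_mem n (proj_mem 𝒳 n (s : X))
  haveI hdec : DirectSum.Decomposition 𝒩 := hNint.chooseDecomposition
  haveI hgs : SetLike.GradedSMul 𝒜 𝒩 := ⟨fun {i j} {a x} ha hx => by
    have hx' : (x : X) ∈ 𝒳 j := Submodule.mem_comap.1 hx
    show ((a • x : ↥S) : X) ∈ 𝒳 (i + j)
    exact SetLike.GradedSMul.smul_mem ha hx'⟩
  have hsurjg : Function.Surjective (⇑f ∘ ⇑S.subtype) := fun y => by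
    obtain ⟨s, hsS, hfs⟩ := hs y
    exact ⟨⟨s, hsS⟩, hfs⟩
  have hgsub : ∀ (n : ℤ) (x : ↥S), x ∈ 𝒩 n → S.subtype x ∈ 𝒳 n := fun n x hx => hx
  have hsub := hess ↥S inferInstance inferInstance inferInstance inferInstance
    𝒩 hdec hgs S.subtype hgsub hsurjg
  intro x
  obtain ⟨s, rfl⟩ := hsub x
  exact s.2

end Ess

end Aux

theorem essential_iff_tensor_bijective {M M' : Type} [Field k] [Ring A] [Algebra k A]
    (𝒜 : ℤ → Submodule k A) [GradedAlgebra 𝒜]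
    (hneg : ∀ n : ℤ, n < 0 → 𝒜 n = ⊥) (hconn : 𝒜 0 = (1 : Submodule k A))
    [AddCommGroup M] [Module k M] [Module A M] [IsScalarTower k A M]
    [AddCommGroup M'] [Module k M'] [Module A M'] [IsScalarTower k A M']
    (ℳ : ℤ → Submodule k M) [DirectSum.Decomposition ℳ] [SetLike.GradedSMul 𝒜 ℳ]
    (ℳ' : ℤ → Submodule k M') [DirectSum.Decomposition ℳ'] [SetLike.GradedSMul 𝒜 ℳ']
    (f : M →ₗ[A] M') (hf : ∀ (n : ℤ) (x : M), x ∈ ℳ n → f x ∈ ℳ' n)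
    (hM' : ∃ n₀ : ℤ, ∀ n : ℤ, n < n₀ → ℳ' n = ⊥) :
    ((Function.Surjective f ∧ IsEssential 𝒜 ℳ f) →
      (Submodule.comap (f.restrictScalars k) (posSMul (⨆ n > (0:ℤ), 𝒜 n) M')
          = posSMul (⨆ n > (0:ℤ), 𝒜 n) M ∧
        posSMul (⨆ n > (0:ℤ), 𝒜 n) M' ⊔ LinearMap.range (f.restrictScalars k) = ⊤)) ∧
    ((∃ n₀ : ℤ, ∀ n : ℤ, n < n₀ → ℳ n = ⊥) →
      (Submodule.comap (f.restrictScalars k) (posSMul (⨆ n > (0:ℤ), 𝒜 n) M')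
          = posSMul (⨆ n > (0:ℤ), 𝒜 n) M ∧
        posSMul (⨆ n > (0:ℤ), 𝒜 n) M' ⊔ LinearMap.range (f.restrictScalars k) = ⊤) →
      (Function.Surjective f ∧ IsEssential 𝒜 ℳ f)) := by
  classical
  constructor
  · rintro ⟨hsurj, hess⟩
    have hker : ∀ x : M, f x = 0 → x ∈ posSMul (⨆ n > (0:ℤ), 𝒜 n) M := by
      by_contra hcon
      push_neg at hcon
      obtain ⟨x, hx0, hxP⟩ := hcon
      have hd : ∃ d : ℤ, proj ℳ d x ∉ posSMul (⨆ n > (0:ℤ), 𝒜 n) M := by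
        by_contra hall
        push_neg at hall
        refine hxP ?_
        rw [← sum_proj ℳ x]
        exact Submodule.sum_mem _ fun n _ => hall n
      obtain ⟨d, hd⟩ := hd
      set x₀ := proj ℳ d x with hx₀def
      have hx₀mem : x₀ ∈ ℳ d := proj_mem ℳ d x
      have hx₀ker : f x₀ = 0 := by
        have h1 := proj_map ℳ' ℳ f hf x d
        rw [hx0, map_zero] at h1
        exact h1.symm
      have hx₀Pd : x₀ ∉ posSMul (⨆ n > (0:ℤ), 𝒜 n) M ⊓ ℳ d := fun h => hd h.1
      obtain ⟨H, hPdH, hHd, hx₀H, hspan⟩ :=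
        hyperplane (X := M) (ℳ d) (posSMul (⨆ n > (0:ℤ), 𝒜 n) M ⊓ ℳ d)
          inf_le_right hx₀mem hx₀Pd
      set T : Set M := (H : Set M) ∪ ⋃ (n : ℤ) (_ : n ≠ d), (ℳ n : Set M) with hT
      have hThom : ∀ t ∈ T, ∃ n, t ∈ ℳ n := by
        rintro t (ht | ht)
        · exact ⟨d, hHd ht⟩
        · simp only [Set.mem_iUnion] at ht
          obtain ⟨n, -, hn⟩ := ht
          exact ⟨n, hn⟩
      have hgrS : ∀ s ∈ Submodule.span A T, ∀ n : ℤ, proj ℳ n s ∈ Submodule.span A T :=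
        span_homogeneous_graded 𝒜 ℳ T hThom
      have hdecomp : ∀ z : M, ∃ s ∈ Submodule.span A T, ∃ c : k, z = s + c • x₀ := by
        refine DirectSum.Decomposition.inductionOn ℳ
          (motive := fun z => ∃ s ∈ Submodule.span A T, ∃ c : k, z = s + c • x₀)
          ⟨0, Submodule.zero_mem _, 0, by simp⟩ (fun {n} m => ?_) ?_
        · obtain ⟨z, hz⟩ := m
          show ∃ s ∈ Submodule.span A T, ∃ c : k, z = s + c • x₀
          by_cases h : n = d
          · subst h
            obtain ⟨h₁, hh₁, c, hc⟩ := hspan z hz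
            exact ⟨h₁, Submodule.subset_span (Or.inl hh₁), c, hc⟩
          · refine ⟨z, Submodule.subset_span (Or.inr ?_), 0, by simp⟩
            exact Set.mem_iUnion.2 ⟨n, Set.mem_iUnion.2 ⟨h, hz⟩⟩
        · rintro z z' ⟨s, hs, c, rfl⟩ ⟨s', hs', c', rfl⟩
          refine ⟨s + s', Submodule.add_mem _ hs hs', c + c', ?_⟩
          rw [add_smul]; abel
      have hsurjS : ∀ y : M', ∃ s : M, s ∈ Submodule.span A T ∧ f s = y := by
        intro y
        obtain ⟨z, rfl⟩ := hsurj y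
        obtain ⟨s, hs, c, rfl⟩ := hdecomp z
        refine ⟨s, hs, ?_⟩
        rw [map_add, LinearMap.map_smul_of_tower, hx₀ker, smul_zero, add_zero]
      have htop := essential_submodule 𝒜 ℳ f hess (Submodule.span A T) hgrS hsurjS
      have hproj : ∀ s ∈ Submodule.span A T,
          proj ℳ d s ∈ H ⊔ (posSMul (⨆ n > (0:ℤ), 𝒜 n) M ⊓ ℳ d) := by
        intro s hs
        induction hs using Submodule.span_induction with
        | zero => simp
        | add y z _ _ hy hz => rw [map_add]; exact Submodule.add_mem _ hy hz
        | mem t ht =>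
          rcases ht with ht | ht
          · rw [proj_of_mem_same ℳ (hHd ht)]; exact Submodule.mem_sup_left ht
          · simp only [Set.mem_iUnion] at ht
            obtain ⟨n, hne, hn⟩ := ht
            rw [proj_of_mem_ne ℳ hn hne]; exact Submodule.zero_mem _
        | smul a s hsmem hIH =>
          have hsplit : a • s = proj 𝒜 0 a • s + (a - proj 𝒜 0 a) • s := by
            rw [← add_smul, add_sub_cancel]
          obtain ⟨c, hc⟩ := Submodule.mem_one.1 (hconn ▸ proj_mem 𝒜 0 a)
          have h1 : proj ℳ d (proj 𝒜 0 a • s) ∈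
              H ⊔ (posSMul (⨆ n > (0:ℤ), 𝒜 n) M ⊓ ℳ d) := by
            rw [← hc, algebraMap_smul, map_smul]
            exact Submodule.smul_mem _ c hIH
          have h2 : proj ℳ d ((a - proj 𝒜 0 a) • s) ∈
              H ⊔ (posSMul (⨆ n > (0:ℤ), 𝒜 n) M ⊓ ℳ d) := by
            have hmem := smul_mem_posSMul 𝒜 (X := M) (sub_proj_zero_mem_pos 𝒜 hneg a) s
            have hP1 : proj ℳ d ((a - proj 𝒜 0 a) • s) ∈ posSMul (⨆ n > (0:ℤ), 𝒜 n) M :=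
              proj_posSMul_mem 𝒜 ℳ d (posSMul (⨆ n > (0:ℤ), 𝒜 n) M)
                (fun i hi a' ha' j z hz _ =>
                  Submodule.subset_span ⟨a', mem_pos 𝒜 hi ha', z, rfl⟩) hmem
            exact Submodule.mem_sup_right ⟨hP1, proj_mem ℳ d _⟩
          rw [hsplit, map_add]
          exact Submodule.add_mem _ h1 h2
      have hx₀S : x₀ ∈ H ⊔ (posSMul (⨆ n > (0:ℤ), 𝒜 n) M ⊓ ℳ d) := by
        have h3 := hproj x₀ (htop x₀)
        rwa [proj_of_mem_same ℳ hx₀mem] at h3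
      rw [sup_eq_left.2 hPdH] at hx₀S
      exact hx₀H hx₀S
    constructor
    · apply le_antisymm
      · intro x hx
        have hx' : f x ∈ posSMul (⨆ n > (0:ℤ), 𝒜 n) M' := hx
        obtain ⟨p, hp, hfp⟩ := posSMul_preimage 𝒜 f hsurj hx'
        have h0 : f (x - p) = 0 := by rw [map_sub, hfp, sub_self]
        have hxp := hker (x - p) h0
        have hxx : x = (x - p) + p := by abel
        rw [hxx]
        exact Submodule.add_mem _ hxp hp
      · intro x hx
        exact posSMul_map 𝒜 f hx
    · have hr : LinearMap.range (f.restrictScalars k) = ⊤ := LinearMap.range_eq_top.2 hsurj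
      rw [hr, sup_top_eq]
  · rintro ⟨n₀, hMbd⟩ ⟨hcomap, hsupEq⟩
    obtain ⟨n₀', hM'bd⟩ := hM'
    have hsurj : Function.Surjective f := by
      have hgr' : ∀ s ∈ LinearMap.range f, ∀ n : ℤ, proj ℳ' n s ∈ LinearMap.range f := by
        rintro s ⟨z, rfl⟩ n
        rw [proj_map ℳ' ℳ f hf z n]
        exact ⟨proj ℳ n z, rfl⟩
      have hsup' : ∀ y : M', ∃ p ∈ posSMul (⨆ n > (0:ℤ), 𝒜 n) M',
          ∃ s ∈ LinearMap.range f, y = p + s := by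
        intro y
        have hy : y ∈ posSMul (⨆ n > (0:ℤ), 𝒜 n) M' ⊔
            LinearMap.range (f.restrictScalars k) := hsupEq ▸ Submodule.mem_top
        obtain ⟨p, hp, s, hsr, hpsum⟩ := Submodule.mem_sup.1 hy
        obtain ⟨z, hz⟩ := hsr
        exact ⟨p, hp, s, ⟨z, hz⟩, hpsum.symm⟩
      have hall := nakayama 𝒜 ℳ' n₀' hM'bd (LinearMap.range f) hgr' hsup'
      intro y
      exact hall y
    refine ⟨hsurj, ?_⟩
    intro N instG instK instA instT 𝒩 instD instGS g hg hfg
    have hgr : ∀ s ∈ LinearMap.range g, ∀ n : ℤ, proj ℳ n s ∈ LinearMap.range g := by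
      rintro s ⟨z, rfl⟩ n
      rw [proj_map ℳ 𝒩 g hg z n]
      exact ⟨proj 𝒩 n z, rfl⟩
    have hker : ∀ x : M, f x = 0 → x ∈ posSMul (⨆ n > (0:ℤ), 𝒜 n) M := by
      intro x hx
      have hmem : x ∈ Submodule.comap (f.restrictScalars k)
          (posSMul (⨆ n > (0:ℤ), 𝒜 n) M') := by
        have : (f.restrictScalars k) x = 0 := hx
        rw [Submodule.mem_comap, this]
        exact Submodule.zero_mem _
      rwa [hcomap] at hmem
    have hsup2 : ∀ x : M, ∃ p ∈ posSMul (⨆ n > (0:ℤ), 𝒜 n) M,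
        ∃ s ∈ LinearMap.range g, x = p + s := by
      intro x
      obtain ⟨z, hz⟩ := hfg (f x)
      have hz' : f (g z) = f x := hz
      have h0 : f (x - g z) = 0 := by rw [map_sub, hz', sub_self]
      refine ⟨x - g z, hker _ h0, g z, ⟨z, rfl⟩, by abel⟩
    have hall := nakayama 𝒜 ℳ n₀ hMbd (LinearMap.range g) hgr hsup2
    intro x
    exact hall x


end Stmt1
end

section
/- Let 2 ≤ a < b, and let R_a ⊆ V^{⊗a}, R_b ⊆ V^{⊗b} be subspaces such that R = R_a ⊕ R_b satisfies the minimality condition. Then the extra conditions (e.c.) hold if and only if for all 2 ≤ m ≤ a−1 and 2 ≤ h ≤ b−1 the triples (V^{⊗m}⊗R_a, R_a⊗V^{⊗m}, Σ_{j=1}^{m-1} V^{⊗j}⊗R_a⊗V^{⊗(m-j)}) and (V^{⊗h}⊗R_b, R_b⊗V^{⊗h}, Σ_{j=1}^{h-1} V^{⊗j}⊗R_b⊗V^{⊗(h-j)}) are distributive, and the inclusions (V^{⊗m}⊗R_a) ∩ (R_a⊗V^{⊗m}) ⊆ V^{⊗(m-1)}⊗R_a⊗V and (V^{⊗h}⊗R_b)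 ∩ (R_b⊗V^{⊗h}) ⊆ V^{⊗(h-1)}⊗R_b⊗V hold. -/
/-!
STATEMENT 15 (Proposition `prop:eciffdistributivity`): the extra conditions (e.c.) hold
if and only if certain triples of subspaces are distributive and certain inclusions hold.

We model the tensor algebra `T(V)` on a finite-dimensional vector space `V` (with basis
`ι`) as the monoid algebra on the free monoid on `ι`; the tensor power `V^{⊗n}` is the
span `Wpow n` of the words of length `n`, and subspaces such as `V^{⊗j} ⊗ R ⊗ V^{⊗m}`
are products of submodules inside this algebra.
-/

noncomputable section

namespace MK

variable (k : Type) [Field k] (ι : Type)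

/-- The tensor algebra `T(V)` on the vector space `V` with basis `ι`. -/
abbrev T := MonoidAlgebra k (FreeMonoid ι)

/-- The basis element of `T(V)` corresponding to a word. -/
def word (w : FreeMonoid ι) : T k ι := MonoidAlgebra.of k (FreeMonoid ι) w

/-- The tensor power `V^{⊗n}` inside `T(V)`. -/
def Wpow (n : ℕ) : Submodule k (T k ι) :=
  Submodule.span k {x | ∃ w : FreeMonoid ι, w.length = n ∧ x = word k ι w}

/-- The irrelevant ideal `T(V)_{>0}`. -/
def Tpos : Submodule k (T k ι) :=
  Submodule.span k {x | ∃ w : FreeMonoid ι, 1 ≤ w.length ∧ x = word k ι w}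

/-- The two-sided ideal `I = ⟨Rt⟩` generated by a subspace `Rt` of `T(V)`. -/
def Isub (Rt : Submodule k (T k ι)) : Submodule k (T k ι) := ⊤ * Rt * ⊤

/-- The minimality condition: `Rt` projects isomorphically onto
`I/(T(V)_{>0}·I + I·T(V)_{>0})`, where `I = ⟨Rt⟩`. -/
def Minimality (Rt : Submodule k (T k ι)) : Prop :=
  Disjoint Rt (Tpos k ι * Isub k ι Rt ⊔ Isub k ι Rt * Tpos k ι) ∧
    Rt ⊔ (Tpos k ι * Isub k ι Rt ⊔ Isub k ι Rt * Tpos k ι) = Isub k ι Rt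

/-- A triple `(E, F₁, F₂)` of subspaces is distributive if
`E ∩ (F₁ + F₂) = (E ∩ F₁) + (E ∩ F₂)`. -/
def DistribTriple (E F₁ F₂ : Submodule k (T k ι)) : Prop :=
  E ⊓ (F₁ ⊔ F₂) = (E ⊓ F₁) ⊔ (E ⊓ F₂)

/-- The extra condition in degree `s` for a relation space `Rs ⊆ V^{⊗s}`:
`(V^{⊗(s-1)}⊗R_s) ∩ (Σ_{j=0}^{s-2} V^{⊗j}⊗R_s⊗V^{⊗(s-1-j)}) = V^{⊗(s-2)}⊗J̄_{s+1}^s`,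
where `J̄_{s+1}^s = (V⊗R_s) ∩ (R_s⊗V)`. -/
def EC (Rs : Submodule k (T k ι)) (s : ℕ) : Prop :=
  (Wpow k ι (s - 1) * Rs) ⊓
      (⨆ j ∈ Finset.range (s - 1), Wpow k ι j * Rs * Wpow k ι (s - 1 - j)) =
    Wpow k ι (s - 2) * ((Wpow k ι 1 * Rs) ⊓ (Rs * Wpow k ι 1))

variable {k ι}

/-- "divide by the prefix `u`" linear map. -/
def pi (u : FreeMonoid ι) : T k ι →ₗ[k] T k ι :=
  (MonoidAlgebra.coeffLinearEquiv k).symm.toLinearMap ∘ₗ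
    Finsupp.lcomapDomain (fun w => u * w) (mul_right_injective u) ∘ₗ
    (MonoidAlgebra.coeffLinearEquiv k).toLinearMap

lemma word_mul (u v : FreeMonoid ι) : word k ι (u * v) = word k ι u * word k ι v :=
  map_mul _ _ _

lemma word_mul_single (u w : FreeMonoid ι) (c : k) :
    word k ι u * MonoidAlgebra.single w c = MonoidAlgebra.single (u * w) c := by
  show MonoidAlgebra.single u 1 * MonoidAlgebra.single w c = MonoidAlgebra.single (u * w) c
  rw [MonoidAlgebra.single_mul_single, one_mul]

lemma pi_word_mul (u : FreeMonoid ι) (f : T k ι) : pi u (word k ι u * f) = f := by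
  have h : (pi (k := k) u) ∘ₗ (LinearMap.mulLeft k (word k ι u)) = LinearMap.id := by
    refine MonoidAlgebra.lhom_ext' fun w => LinearMap.ext fun c => ?_
    show pi u (word k ι u * MonoidAlgebra.single w c) = MonoidAlgebra.single w c
    rw [word_mul_single]
    show MonoidAlgebra.ofCoeff (Finsupp.comapDomain _ _ _) = _
    exact congrArg MonoidAlgebra.ofCoeff <| Finsupp.comapDomain_single (fun w' => u * w') w c
      ((mul_right_injective u).injOn)
  exact LinearMap.congr_fun h f

lemma pi_word_mul_ne (u v : FreeMonoid ι) (hlen : u.length = v.length) (hne : u ≠ v)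
    (f : T k ι) : pi u (word k ι v * f) = 0 := by
  have h : (pi (k := k) u) ∘ₗ (LinearMap.mulLeft k (word k ι v)) = 0 := by
    refine MonoidAlgebra.lhom_ext' fun w => LinearMap.ext fun c => ?_
    show pi u (word k ι v * MonoidAlgebra.single w c) = 0
    rw [word_mul_single]
    ext w'
    show Finsupp.comapDomain _ _ _ w' = _
    rw [Finsupp.comapDomain_apply]
    refine Finsupp.single_eq_of_ne ?_
    intro hE
    apply hne
    have hl : v.toList ++ w.toList = u.toList ++ w'.toList := congrArg FreeMonoid.toList hE.symm
    have := (List.append_inj hl (by simpa [FreeMonoid.length] using hlen.symm)).1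
    exact (FreeMonoid.toList.injective this).symm
  simpa using LinearMap.congr_fun h f


section Rep
variable {m : ℕ} {X Y : Submodule k (T k ι)}

lemma wpow_mul_eq (m : ℕ) (X : Submodule k (T k ι)) :
    Wpow k ι m * X =
      ⨆ u : {w : FreeMonoid ι // w.length = m},
        X.map (LinearMap.mulLeft k (word k ι u.1)) := by
  apply le_antisymm
  · refine Submodule.mul_le.mpr ?_
    intro g hg x hx
    induction hg using Submodule.span_induction with
    | mem g hgmem =>
      obtain ⟨w, hw, rfl⟩ := hgmem
      exact Submodule.mem_iSup_of_mem ⟨w, hw⟩ ⟨x, hx, rfl⟩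
    | zero => rw [zero_mul]; exact zero_mem _
    | add a b _ _ ha hb => rw [add_mul]; exact add_mem ha hb
    | smul c a _ ha => rw [smul_mul_assoc]; exact Submodule.smul_mem _ _ ha
  · apply iSup_le
    rintro ⟨u, hu⟩ z ⟨x, hx, rfl⟩
    exact Submodule.mul_mem_mul (Submodule.subset_span ⟨u, hu, rfl⟩) hx

lemma pi_mem_of_mem_mul {z : T k ι} (hz : z ∈ Wpow k ι m * X) {u : FreeMonoid ι}
    (hu : u.length = m) : pi u z ∈ X := by
  rw [wpow_mul_eq, Submodule.mem_iSup_iff_exists_finsupp] at hz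
  obtain ⟨f, hf, rfl⟩ := hz
  rw [map_finsuppSum]
  refine Submodule.sum_mem _ ?_
  intro i _
  obtain ⟨x, hx, hfi⟩ := hf i
  rw [← hfi]
  show pi u (word k ι i.1 * x) ∈ X
  by_cases h : u = i.1
  · subst h; rwa [pi_word_mul]
  · rw [pi_word_mul_ne u i.1 (by rw [hu, i.2]) h]; exact zero_mem _

lemma mem_mul_of_pi {z : T k ι} (hz : z ∈ Wpow k ι m * X)
    (hY : ∀ u : FreeMonoid ι, u.length = m → pi u z ∈ Y) : z ∈ Wpow k ι m * Y := by
  rw [wpow_mul_eq, Submodule.mem_iSup_iff_exists_finsupp] at hz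
  obtain ⟨f, hf, rfl⟩ := hz
  rw [Finsupp.sum]
  refine Submodule.sum_mem _ ?_
  intro i hi
  obtain ⟨x, hx, hfi⟩ := hf i
  have hpi : pi i.1 (f.sum fun _ x => x) = x := by
    rw [map_finsuppSum, Finsupp.sum]
    rw [Finset.sum_eq_single i]
    · rw [← hfi]; exact pi_word_mul i.1 x
    · intro j _ hji
      obtain ⟨y, _, hfj⟩ := hf j
      rw [← hfj]
      exact pi_word_mul_ne i.1 j.1 (by rw [i.2, j.2]) (fun hE => hji (Subtype.ext hE.symm)) y
    · intro hns
      exact absurd hi hns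
  have hxY : x ∈ Y := by rw [← hpi]; exact hY i.1 i.2
  rw [← hfi]
  exact Submodule.mul_mem_mul (Submodule.subset_span ⟨i.1, i.2, rfl⟩) hxY

lemma wpow_mul_inf (m : ℕ) (X Y : Submodule k (T k ι)) :
    Wpow k ι m * (X ⊓ Y) = (Wpow k ι m * X) ⊓ (Wpow k ι m * Y) := by
  apply le_antisymm
  · exact le_inf (mul_le_mul' le_rfl inf_le_left)
      (mul_le_mul' le_rfl inf_le_right)
  · intro z hz
    rw [Submodule.mem_inf] at hz
    exact mem_mul_of_pi hz.1 fun u hu =>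
      Submodule.mem_inf.mpr ⟨pi_mem_of_mem_mul hz.1 hu, pi_mem_of_mem_mul hz.2 hu⟩

lemma wpow_mul_cancel [Nonempty ι] (h : Wpow k ι m * X ≤ Wpow k ι m * Y) : X ≤ Y := by
  intro x hx
  set u : FreeMonoid ι := FreeMonoid.ofList (List.replicate m (Classical.arbitrary ι)) with hu_def
  have hu : u.length = m := by
    show (FreeMonoid.toList u).length = m
    simp [hu_def]
  have h1 : word k ι u * x ∈ Wpow k ι m * Y :=
    h (Submodule.mul_mem_mul (Submodule.subset_span ⟨u, hu, rfl⟩) hx)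
  have h2 := pi_mem_of_mem_mul h1 hu
  rwa [pi_word_mul] at h2

end Rep

lemma word_one : word k ι 1 = 1 := map_one (MonoidAlgebra.of k (FreeMonoid ι))

lemma wpow_zero : Wpow k ι 0 = 1 := by
  rw [Wpow, Submodule.one_eq_span]
  congr 1
  ext x
  constructor
  · rintro ⟨w, hw, rfl⟩
    rw [FreeMonoid.length_eq_zero] at hw
    subst hw
    rw [word_one]; rfl
  · rintro rfl
    exact ⟨1, rfl, word_one.symm⟩

lemma wpow_mul_wpow (m n : ℕ) : Wpow k ι m * Wpow k ι n = Wpow k ι (m + n) := by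
  rw [Wpow, Wpow, Wpow, Submodule.span_mul_span]
  congr 1
  ext x
  rw [Set.mem_mul]
  constructor
  · rintro ⟨a, ⟨u, hu, rfl⟩, b, ⟨v, hv, rfl⟩, rfl⟩
    exact ⟨u * v, by simp [FreeMonoid.length_mul, hu, hv], (word_mul u v).symm⟩
  · rintro ⟨w, hw, rfl⟩
    refine ⟨word k ι (FreeMonoid.ofList (w.toList.take m)),
      ⟨_, ?_, rfl⟩, word k ι (FreeMonoid.ofList (w.toList.drop m)), ⟨_, ?_, rfl⟩, ?_⟩
    · show (w.toList.take m).length = m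
      have : w.toList.length = m + n := hw
      simp [this]
    · show (w.toList.drop m).length = n
      have : w.toList.length = m + n := hw
      simp [this]
    · rw [← word_mul]
      congr 1
      apply FreeMonoid.toList.injective
      show w.toList.take m ++ w.toList.drop m = w.toList
      exact List.take_append_drop m w.toList

lemma wpow_bot [IsEmpty ι] {n : ℕ} (hn : 1 ≤ n) : Wpow k ι n = ⊥ := by
  rw [Wpow]
  convert Submodule.span_empty
  rw [Set.eq_empty_iff_forall_notMem]
  rintro x ⟨w, hw, rfl⟩
  rcases hl : w.toList with _ | ⟨a, l⟩
  · have h0 : w.length = 0 := by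
      show (FreeMonoid.toList w).length = 0
      rw [hl]; rfl
    omega
  · exact isEmptyElim a

section Comb

variable (R : Submodule k (T k ι))

lemma wpow_shift (i j n : ℕ) (h : i + j = n) :
    Wpow k ι i * Wpow k ι j = Wpow k ι n := by rw [wpow_mul_wpow, h]

def MM (n : ℕ) : Submodule k (T k ι) :=
  ⨆ j ∈ Finset.Icc 1 (n - 1), Wpow k ι j * R * Wpow k ι (n - j)

def CC (n : ℕ) : Submodule k (T k ι) := R * Wpow k ι n ⊔ MM R n

def PP (n : ℕ) : Submodule k (T k ι) := Wpow k ι n * R ⊓ CC R n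

lemma MM_one : MM R 1 = ⊥ := by
  rw [MM, show (1:ℕ) - 1 = 0 from rfl, show Finset.Icc 1 0 = ∅ from Finset.Icc_eq_empty (by omega)]
  simp

lemma CC_one : CC R 1 = R * Wpow k ι 1 := by rw [CC, MM_one, sup_bot_eq]

lemma MM_succ {n : ℕ} (hn : 1 ≤ n) : MM R (n + 1) = Wpow k ι 1 * CC R n := by
  rw [CC, Submodule.mul_sup, MM, MM]
  apply le_antisymm
  · refine iSup₂_le fun j hj => ?_
    rw [Finset.mem_Icc] at hj
    rcases eq_or_lt_of_le hj.1 with h1 | h2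
    · obtain rfl : j = 1 := h1.symm
      apply le_sup_of_le_left
      rw [show n + 1 - 1 = n from rfl, mul_assoc]
    · apply le_sup_of_le_right
      have hj2 : 2 ≤ j := h2
      have e1 : Wpow k ι j * R * Wpow k ι (n + 1 - j)
          = Wpow k ι 1 * (Wpow k ι (j-1) * R * Wpow k ι (n - (j-1))) := by
        rw [← wpow_shift 1 (j-1) j (by omega), show n + 1 - j = n - (j-1) by omega,
          mul_assoc (Wpow k ι 1), mul_assoc (Wpow k ι 1)]
      rw [e1]
      have hmem : j - 1 ∈ Finset.Icc 1 (n - 1) := by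
        rw [Finset.mem_Icc]; omega
      exact mul_le_mul' le_rfl (le_iSup₂_of_le (j-1) hmem le_rfl)
  · apply sup_le
    · have e1 : Wpow k ι 1 * (R * Wpow k ι n) = Wpow k ι 1 * R * Wpow k ι (n + 1 - 1) := by
        rw [show n + 1 - 1 = n from rfl, mul_assoc]
      rw [e1]
      exact le_iSup₂_of_le 1 (by rw [Finset.mem_Icc]; omega) le_rfl
    · rw [Submodule.mul_iSup]
      refine iSup_le fun j => ?_
      rw [Submodule.mul_iSup]
      refine iSup_le fun hj => ?_
      rw [Finset.mem_Icc] at hj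
      have e1 : Wpow k ι 1 * (Wpow k ι j * R * Wpow k ι (n - j))
          = Wpow k ι (j+1) * R * Wpow k ι (n + 1 - (j+1)) := by
        rw [← wpow_shift 1 j (j+1) (by omega), show n + 1 - (j+1) = n - j by omega,
          mul_assoc (Wpow k ι 1), mul_assoc (Wpow k ι 1)]
      rw [e1]
      exact le_iSup₂_of_le (j+1) (by rw [Finset.mem_Icc]; omega) le_rfl

lemma PP_succ {n : ℕ} (hn : 1 ≤ n) :
    Wpow k ι 1 * PP R n = (Wpow k ι (n+1) * R) ⊓ MM R (n+1) := by
  rw [PP, wpow_mul_inf, MM_succ R hn, ← mul_assoc, wpow_shift 1 n (n+1) (by omega)]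

lemma PP_le_succ {n : ℕ} (hn : 1 ≤ n) : Wpow k ι 1 * PP R n ≤ PP R (n+1) := by
  rw [PP_succ R hn, PP]
  exact inf_le_inf_left _ le_sup_right

lemma wpow_mul_PP_le (t : ℕ) {n : ℕ} (hn : 1 ≤ n) :
    Wpow k ι t * PP R n ≤ PP R (n + t) := by
  induction t with
  | zero => rw [wpow_zero, one_mul, Nat.add_zero]
  | succ t ih =>
    have e1 : Wpow k ι (t+1) * PP R n = Wpow k ι 1 * (Wpow k ι t * PP R n) := by
      rw [← mul_assoc, wpow_shift 1 t (t+1) (by omega)]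
    rw [e1, show n + (t+1) = (n+t) + 1 by omega]
    exact le_trans (mul_le_mul' le_rfl ih) (PP_le_succ R (by omega))

lemma CC_eq_biSup_range {n : ℕ} (hn : 1 ≤ n) :
    (⨆ j ∈ Finset.range n, Wpow k ι j * R * Wpow k ι (n - j)) = CC R n := by
  have hset : Finset.range n = insert 0 (Finset.Icc 1 (n-1)) := by
    ext j
    simp only [Finset.mem_range, Finset.mem_insert, Finset.mem_Icc]
    omega
  rw [hset, Finset.iSup_insert, CC, MM, wpow_zero, one_mul,
    show n - 0 = n from rfl]

lemma EC_iff {s : ℕ} (hs : 2 ≤ s) :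
    EC k ι R s ↔ PP R (s-1) = Wpow k ι (s-2) * PP R 1 := by
  have h1 : PP R 1 = (Wpow k ι 1 * R) ⊓ (R * Wpow k ι 1) := by rw [PP, CC_one]
  have h2 : PP R (s-1) = (Wpow k ι (s-1) * R) ⊓
      ⨆ j ∈ Finset.range (s-1), Wpow k ι j * R * Wpow k ι (s-1-j) := by
    rw [PP, CC_eq_biSup_range R (by omega : 1 ≤ s - 1)]
  rw [EC, h2, h1]

end Comb

lemma ec_iff_cond (s : ℕ) (hs : 2 ≤ s) (R : Submodule k (T k ι)) :
    EC k ι R s ↔ ∀ m, 2 ≤ m → m ≤ s - 1 →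
      DistribTriple k ι (Wpow k ι m * R) (R * Wpow k ι m)
        (⨆ j ∈ Finset.Icc 1 (m - 1), Wpow k ι j * R * Wpow k ι (m - j)) ∧
      (Wpow k ι m * R) ⊓ (R * Wpow k ι m) ≤ Wpow k ι (m - 1) * R * Wpow k ι 1 := by
  cases isEmpty_or_nonempty ι with
  | inl hE =>
    have hec : EC k ι R s := by
      rw [EC, wpow_bot (show (1:ℕ) ≤ s - 1 by omega), wpow_bot (le_refl 1)]
      simp
    have hc : ∀ m, 2 ≤ m → m ≤ s - 1 →
        DistribTriple k ι (Wpow k ι m * R) (R * Wpow k ι m)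
          (⨆ j ∈ Finset.Icc 1 (m - 1), Wpow k ι j * R * Wpow k ι (m - j)) ∧
        (Wpow k ι m * R) ⊓ (R * Wpow k ι m) ≤ Wpow k ι (m - 1) * R * Wpow k ι 1 := by
      intro m hm _
      constructor
      · rw [DistribTriple, wpow_bot (show (1:ℕ) ≤ m by omega)]
        simp
      · rw [wpow_bot (show (1:ℕ) ≤ m by omega)]
        simp
    exact ⟨fun _ => hc, fun _ => hec⟩
  | inr hN =>
    rw [EC_iff R hs]
    constructor
    · intro hEC m hm2 hms
      have key : ∀ n, 1 ≤ n → n ≤ s - 1 → PP R n = Wpow k ι (n-1) * PP R 1 := by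
        intro n h1 h2
        apply le_antisymm
        · apply wpow_mul_cancel (m := s - 1 - n)
          calc Wpow k ι (s-1-n) * PP R n
              ≤ PP R (n + (s-1-n)) := wpow_mul_PP_le R _ h1
            _ = Wpow k ι (s-1-n) * (Wpow k ι (n-1) * PP R 1) := by
                rw [show n + (s-1-n) = s-1 by omega, hEC,
                  ← wpow_shift (s-1-n) (n-1) (s-2) (by omega), mul_assoc]
        · have h3 := wpow_mul_PP_le R (n-1) (le_refl 1)
          rwa [show 1 + (n-1) = n by omega] at h3
      have hMM : Wpow k ι 1 * PP R (m-1) = (Wpow k ι m * R) ⊓ MM R m := by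
        have h4 := PP_succ R (show 1 ≤ m - 1 by omega)
        rwa [show m - 1 + 1 = m by omega] at h4
      have hPm : PP R m = Wpow k ι 1 * PP R (m-1) := by
        rw [key m (by omega) hms, key (m-1) (by omega) (by omega), ← mul_assoc,
          wpow_shift 1 (m-1-1) (m-1) (by omega)]
      constructor
      · show DistribTriple k ι (Wpow k ι m * R) (R * Wpow k ι m) (MM R m)
        rw [DistribTriple]
        apply le_antisymm
        · have h5 : (Wpow k ι m * R) ⊓ (R * Wpow k ι m ⊔ MM R m) = PP R m := rfl
          rw [h5, hPm, hMM]
          exact le_sup_right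
        · exact sup_le (inf_le_inf_left _ le_sup_left) (inf_le_inf_left _ le_sup_right)
      · have h1 : (Wpow k ι m * R) ⊓ (R * Wpow k ι m) ≤ PP R m :=
          inf_le_inf_left _ le_sup_left
        have h2 : PP R 1 ≤ R * Wpow k ι 1 := by rw [PP, CC_one]; exact inf_le_right
        calc (Wpow k ι m * R) ⊓ (R * Wpow k ι m)
            ≤ PP R m := h1
          _ = Wpow k ι (m-1) * PP R 1 := key m (by omega) hms
          _ ≤ Wpow k ι (m-1) * (R * Wpow k ι 1) := mul_le_mul' le_rfl h2
          _ = Wpow k ι (m-1) * R * Wpow k ι 1 := (mul_assoc _ _ _).symm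
    · intro hcond
      have key : ∀ n, 1 ≤ n → n ≤ s - 1 → PP R n = Wpow k ι (n-1) * PP R 1 := by
        intro n h1
        induction n, h1 using Nat.le_induction with
        | base => intro _; rw [show (1:ℕ)-1 = 0 from rfl, wpow_zero, one_mul]
        | succ n hn ih =>
          intro hns
          obtain ⟨hD, hI⟩ := hcond (n+1) (by omega) hns
          have hMM : Wpow k ι 1 * PP R n = (Wpow k ι (n+1) * R) ⊓ MM R (n+1) := PP_succ R hn
          have hZ : Wpow k ι (n-1) * R * Wpow k ι 1 ≤ CC R n := by
            rcases eq_or_lt_of_le hn with h1 | h2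
            · obtain rfl : n = 1 := h1.symm
              rw [CC, show (1:ℕ)-1 = 0 from rfl, wpow_zero, one_mul]
              exact le_sup_left
            · rw [CC]
              apply le_sup_of_le_right
              rw [MM]
              have e : Wpow k ι (n-1) * R * Wpow k ι 1
                  = Wpow k ι (n-1) * R * Wpow k ι (n - (n-1)) := by
                rw [show n - (n-1) = 1 by omega]
              rw [e]
              exact le_iSup₂_of_le (n-1) (by rw [Finset.mem_Icc]; omega) le_rfl
          have hAB : (Wpow k ι (n+1) * R) ⊓ (R * Wpow k ι (n+1)) ≤ Wpow k ι 1 * PP R n := by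
            have hsplit : Wpow k ι n * R * Wpow k ι 1
                = Wpow k ι 1 * (Wpow k ι (n-1) * R * Wpow k ι 1) := by
              rw [← wpow_shift 1 (n-1) n (by omega), mul_assoc (Wpow k ι 1),
                mul_assoc (Wpow k ι 1)]
            have hA : Wpow k ι (n+1) * R = Wpow k ι 1 * (Wpow k ι n * R) := by
              rw [← mul_assoc, wpow_shift 1 n (n+1) (by omega)]
            have step1 : (Wpow k ι (n+1) * R) ⊓ (R * Wpow k ι (n+1))
                ≤ (Wpow k ι 1 * (Wpow k ι n * R)) ⊓
                  (Wpow k ι 1 * (Wpow k ι (n-1) * R * Wpow k ι 1)) :=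
              le_inf (hA ▸ inf_le_left) (le_trans hI (le_of_eq hsplit))
            rw [← wpow_mul_inf] at step1
            refine le_trans step1 (mul_le_mul' le_rfl ?_)
            exact le_trans (inf_le_inf_left _ hZ) le_rfl
          have hPP : PP R (n+1) = Wpow k ι 1 * PP R n := by
            apply le_antisymm
            · have hD' : (Wpow k ι (n+1) * R) ⊓ (R * Wpow k ι (n+1) ⊔ MM R (n+1))
                  = ((Wpow k ι (n+1) * R) ⊓ (R * Wpow k ι (n+1))) ⊔
                    ((Wpow k ι (n+1) * R) ⊓ MM R (n+1)) := hD
              show (Wpow k ι (n+1) * R) ⊓ CC R (n+1) ≤ _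
              rw [CC, hD']
              exact sup_le hAB (le_of_eq hMM.symm)
            · exact PP_le_succ R hn
          rw [hPP, ih (by omega), ← mul_assoc,
            wpow_shift 1 (n-1) ((n+1)-1) (by omega)]
      rw [key (s-1) (by omega) (le_refl _), show s-1-1 = s-2 by omega]

variable (k ι)

/-- Let `2 ≤ a < b`, `R_a ⊆ V^{⊗a}`, `R_b ⊆ V^{⊗b}` with `R = R_a ⊕ R_b` satisfying the
minimality condition.  The extra conditions (e.c.) hold if and only if for all
`2 ≤ m ≤ a−1` and `2 ≤ h ≤ b−1` the triples
`(V^{⊗m}⊗R_a, R_a⊗V^{⊗m}, Σ_{j=1}^{m-1} V^{⊗j}⊗R_a⊗V^{⊗(m-j)})` and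
`(V^{⊗h}⊗R_b, R_b⊗V^{⊗h}, Σ_{j=1}^{h-1} V^{⊗j}⊗R_b⊗V^{⊗(h-j)})` are distributive and
the inclusions `(V^{⊗m}⊗R_a) ∩ (R_a⊗V^{⊗m}) ⊆ V^{⊗(m-1)}⊗R_a⊗V` and
`(V^{⊗h}⊗R_b) ∩ (R_b⊗V^{⊗h}) ⊆ V^{⊗(h-1)}⊗R_b⊗V` hold. -/
theorem ec_iff_distributive [Fintype ι] (a b : ℕ) (ha : 2 ≤ a) (hab : a < b)
    (Ra Rb : Submodule k (T k ι)) (hRa : Ra ≤ Wpow k ι a) (hRb : Rb ≤ Wpow k ι b)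
    (hmin : Minimality k ι (Ra ⊔ Rb)) :
    (EC k ι Ra a ∧ EC k ι Rb b) ↔
      ((∀ m, 2 ≤ m → m ≤ a - 1 →
          DistribTriple k ι (Wpow k ι m * Ra) (Ra * Wpow k ι m)
            (⨆ j ∈ Finset.Icc 1 (m - 1), Wpow k ι j * Ra * Wpow k ι (m - j)) ∧
          (Wpow k ι m * Ra) ⊓ (Ra * Wpow k ι m) ≤ Wpow k ι (m - 1) * Ra * Wpow k ι 1) ∧
        (∀ h, 2 ≤ h → h ≤ b - 1 →
          DistribTriple k ι (Wpow k ι h * Rb) (Rb * Wpow k ι h)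
            (⨆ j ∈ Finset.Icc 1 (h - 1), Wpow k ι j * Rb * Wpow k ι (h - j)) ∧
          (Wpow k ι h * Rb) ⊓ (Rb * Wpow k ι h) ≤ Wpow k ι (h - 1) * Rb * Wpow k ι 1)) := by
  have hb : 2 ≤ b := by omega
  exact and_congr (ec_iff_cond a ha Ra) (ec_iff_cond b hb Rb)

end MK
end
end

section
/- Let (E, E', F_1, …, F_t, G_1, …, G_{t'}) be a sequence of subspaces of a fixed vector space with E ∩ E' = 0. Then this sequence is (t,t')-bidistributive if and only if the triple (Σ_{j=1}^t F_j + Σ_{j'=1}^{t'} G_{j'}, E, E') and the sequences (E, F_1, …, F_t, G_1, …, G_{t'}) and (E', F_1, …, F_t, G_1, …, G_{t'}) are distributive, and moreover Σ_{j'=1}^{t'} (E ∩ G_{j'}) ⊆ Σ_{j=1}^t (E ∩ F_j) and Σ_{j=1}^t (E' ∩ F_j) ⊆ Σ_{j'=1}^{t'} (E' ∩ G_{j'}). -/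
/-!
STATEMENT 17: characterization of `(t,t')`-bidistributive tuples of subspaces
(Lemma `lem:crossedincl` of the paper).
-/

/-- A tuple `(E, F₁, …, Fₜ)` of subspaces of a vector space is *distributive* if
`E ∩ (Σⱼ Fⱼ) = Σⱼ (E ∩ Fⱼ)`. -/
def IsDistributive {k V α : Type*} [Field k] [AddCommGroup V] [Module k V]
    (E : Submodule k V) (F : α → Submodule k V) : Prop :=
  E ⊓ (⨆ j, F j) = ⨆ j, E ⊓ F j

/-- A tuple `(E, E', F₁, …, Fₜ, G₁, …, G_{t'})` of subspaces is *(t,t')-bidistributive* if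
`E ∩ E' = 0` and `(E ⊕ E') ∩ (Σⱼ Fⱼ + Σⱼ' Gⱼ') = Σⱼ (E ∩ Fⱼ) ⊕ Σⱼ' (E' ∩ Gⱼ')`. -/
def IsBidistributive {k V : Type*} [Field k] [AddCommGroup V] [Module k V] {t t' : ℕ}
    (E E' : Submodule k V) (F : Fin t → Submodule k V) (G : Fin t' → Submodule k V) : Prop :=
  E ⊓ E' = ⊥ ∧
    (E ⊔ E') ⊓ ((⨆ j, F j) ⊔ ⨆ j', G j') = (⨆ j, E ⊓ F j) ⊔ ⨆ j', E' ⊓ G j'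

private lemma iSup_fin_two' {α : Type*} [CompleteLattice α] (f : Fin 2 → α) :
    (⨆ j, f j) = f 0 ⊔ f 1 :=
  le_antisymm (iSup_le fun i => by fin_cases i <;> simp)
    (sup_le (le_iSup f 0) (le_iSup f 1))

/-- Let `(E, E', F₁, …, Fₜ, G₁, …, G_{t'})` be a sequence of subspaces of a fixed vector
space with `E ∩ E' = 0`.  Then this sequence is `(t,t')`-bidistributive if and only if the
triple `(Σ Fⱼ + Σ Gⱼ', E, E')` and the sequences `(E, F₁, …, Fₜ, G₁, …, G_{t'})` and
`(E', F₁, …, Fₜ, G₁, …, G_{t'})` are distributive, and moreover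
`Σⱼ' (E ∩ Gⱼ') ⊆ Σⱼ (E ∩ Fⱼ)` and `Σⱼ (E' ∩ Fⱼ) ⊆ Σⱼ' (E' ∩ Gⱼ')`. -/
theorem bidistributive_iff {k V : Type*} [Field k] [AddCommGroup V] [Module k V] {t t' : ℕ}
    (E E' : Submodule k V) (F : Fin t → Submodule k V) (G : Fin t' → Submodule k V)
    (hEE' : E ⊓ E' = ⊥) :
    IsBidistributive E E' F G ↔
      (IsDistributive ((⨆ j, F j) ⊔ ⨆ j', G j') ![E, E'] ∧
        IsDistributive E (Sum.elim F G) ∧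
        IsDistributive E' (Sum.elim F G)) ∧
      ((⨆ j', E ⊓ G j') ≤ ⨆ j, E ⊓ F j) ∧
        ((⨆ j, E' ⊓ F j) ≤ ⨆ j', E' ⊓ G j') := by
  set S := (⨆ j, F j) ⊔ ⨆ j', G j' with hS
  have hsum : (⨆ x, Sum.elim F G x) = S := by rw [iSup_sum]; simp [S]
  have h1 : (⨆ x, E ⊓ Sum.elim F G x) = (⨆ j, E ⊓ F j) ⊔ ⨆ j', E ⊓ G j' := by
    rw [iSup_sum]; simp
  have h2 : (⨆ x, E' ⊓ Sum.elim F G x) = (⨆ j, E' ⊓ F j) ⊔ ⨆ j', E' ⊓ G j' := by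
    rw [iSup_sum]; simp
  have hfin : (⨆ j, (![E, E'] : Fin 2 → Submodule k V) j) = E ⊔ E' := by
    rw [iSup_fin_two']; simp
  have hfin2 : (⨆ j, S ⊓ (![E, E'] : Fin 2 → Submodule k V) j) = (S ⊓ E) ⊔ (S ⊓ E') := by
    rw [iSup_fin_two']; simp
  -- modular law consequences
  have hmodE : ∀ (a b : Submodule k V), a ≤ E → b ≤ E' → E ⊓ (a ⊔ b) = a := by
    intro a b ha hb
    rw [inf_comm, sup_inf_assoc_of_le _ ha]
    have : b ⊓ E = ⊥ := le_bot_iff.1 <| hEE' ▸ le_inf inf_le_right (inf_le_left.trans hb)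
    rw [this, sup_bot_eq]
  have hmodE' : ∀ (a b : Submodule k V), a ≤ E → b ≤ E' → E' ⊓ (a ⊔ b) = b := by
    intro a b ha hb
    rw [inf_comm, sup_comm, sup_inf_assoc_of_le _ hb]
    have : a ⊓ E' = ⊥ := le_bot_iff.1 <| hEE' ▸ le_inf (inf_le_left.trans ha) inf_le_right
    rw [this, sup_bot_eq]
  have hAE : (⨆ j, E ⊓ F j) ≤ E := iSup_le fun _ => inf_le_left
  have hBE' : (⨆ j', E' ⊓ G j') ≤ E' := iSup_le fun _ => inf_le_left
  have hAS : (⨆ j, E ⊓ F j) ≤ S := (iSup_le fun j => inf_le_right.trans (le_iSup F j)).trans le_sup_left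
  have hBS : (⨆ j', E' ⊓ G j') ≤ S := (iSup_le fun j => inf_le_right.trans (le_iSup G j)).trans le_sup_right
  constructor
  · rintro ⟨-, h⟩
    have hES : E ⊓ S = ⨆ j, E ⊓ F j := by
      have : E ⊓ S = E ⊓ ((E ⊔ E') ⊓ S) := by
        rw [← inf_assoc, inf_eq_left.2 (le_sup_left : E ≤ E ⊔ E')]
      rw [this, h, hmodE _ _ hAE hBE']
    have hE'S : E' ⊓ S = ⨆ j', E' ⊓ G j' := by
      have : E' ⊓ S = E' ⊓ ((E ⊔ E') ⊓ S) := by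
        rw [← inf_assoc, inf_eq_left.2 (le_sup_right : E' ≤ E ⊔ E')]
      rw [this, h, hmodE' _ _ hAE hBE']
    have hcr1 : (⨆ j', E ⊓ G j') ≤ ⨆ j, E ⊓ F j := by
      rw [← hES]
      exact le_inf (iSup_le fun _ => inf_le_left)
        ((iSup_le fun j => inf_le_right.trans (le_iSup G j)).trans le_sup_right)
    have hcr2 : (⨆ j, E' ⊓ F j) ≤ ⨆ j', E' ⊓ G j' := by
      rw [← hE'S]
      exact le_inf (iSup_le fun _ => inf_le_left)
        ((iSup_le fun j => inf_le_right.trans (le_iSup F j)).trans le_sup_left)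
    refine ⟨⟨?_, ?_, ?_⟩, hcr1, hcr2⟩
    · unfold IsDistributive
      rw [hfin, hfin2, inf_comm S E, inf_comm S E', hES, hE'S, ← h, inf_comm]
    · unfold IsDistributive
      rw [hsum, h1, hES, sup_eq_left.2 hcr1]
    · unfold IsDistributive
      rw [hsum, h2, hE'S, sup_eq_right.2 hcr2]
  · rintro ⟨⟨hd, hdE, hdE'⟩, hcr1, hcr2⟩
    refine ⟨hEE', ?_⟩
    unfold IsDistributive at hd hdE hdE'
    rw [hsum, h1] at hdE
    rw [hsum, h2] at hdE'
    rw [hfin, hfin2] at hd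
    rw [inf_comm, hd, inf_comm S E, inf_comm S E', hdE, hdE',
      sup_eq_left.2 hcr1, sup_eq_right.2 hcr2]
end
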